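/- Let m ≥ 2 be even and let A be a real m-th order n-dimensional symmetric tensor. Then A is positive semi-definite if and only if all of its H-eigenvalues are nonnegative, i.e., A xᵐ ≥ 0 for all x ∈ ℝⁿ if and only if every λ ∈ ℝ admitting a nonzero x ∈ ℝⁿ with A x^{m-1} = λ x^{[m-1]} satisfies λ ≥ 0. -/

import Mathlib

open Finset

variable {m n : ℕ}

/-- The homogeneous form `A xᵐ` of an `m`-th order `n`-dimensional tensor `A`. -/
noncomputable def tApply (A : (Fin m → Fin n) → ℝ) (x : Fin n → ℝ) : ℝ :=
  ∑ f : Fin m → Fin n, A f * ∏ j, x (f j)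

/-- A tensor is symmetric if its entries are invariant under any permutation of the indices. -/
def IsSymmT (A : (Fin m → Fin n) → ℝ) : Prop :=
  ∀ (σ : Equiv.Perm (Fin m)) (f : Fin m → Fin n), A (f ∘ σ) = A f

/-- The `i`-th component of the vector `A x^{m-1}`:
`Σ_{i₂,…,i_m} a_{i i₂ ⋯ i_m} x_{i₂} ⋯ x_{i_m}`. -/
noncomputable def tVec [NeZero m] (A : (Fin m → Fin n) → ℝ) (x : Fin n → ℝ) (i : Fin n) : ℝ :=
  ∑ f ∈ univ.filter (fun f : Fin m → Fin n => f 0 = i),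
    A f * ∏ j ∈ univ.erase (0 : Fin m), x (f j)

/-- The `i`-th component of the vector `A x^{m-1}` for complex `x`. -/
noncomputable def tVecC [NeZero m] (A : (Fin m → Fin n) → ℝ) (x : Fin n → ℂ) (i : Fin n) : ℂ :=
  ∑ f ∈ univ.filter (fun f : Fin m → Fin n => f 0 = i),
    (A f : ℂ) * ∏ j ∈ univ.erase (0 : Fin m), x (f j)

/-- The sum of the absolute values of the off-diagonal entries in the `i`-th row of `A`. -/
noncomputable def offDiagSum [NeZero m] (A : (Fin m → Fin n) → ℝ) (i : Fin n) : ℝ :=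
  ∑ f ∈ univ.filter (fun f : Fin m → Fin n => f 0 = i ∧ f ≠ (fun _ => i)), |A f|

/-- A diagonally dominated tensor. -/
def DiagDom [NeZero m] (A : (Fin m → Fin n) → ℝ) : Prop :=
  ∀ i : Fin n, offDiagSum A i ≤ A (fun _ => i)

/-- A strictly diagonally dominated tensor. -/
def StrictDiagDom [NeZero m] (A : (Fin m → Fin n) → ℝ) : Prop :=
  ∀ i : Fin n, offDiagSum A i < A (fun _ => i)

/-- The sum of all the entries in the `i`-th row of `A`. -/
noncomputable def rowSum [NeZero m] (A : (Fin m → Fin n) → ℝ) (i : Fin n) : ℝ :=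
  ∑ f ∈ univ.filter (fun f : Fin m → Fin n => f 0 = i), A f

/-- A B₀ tensor. -/
def IsB0 [NeZero m] (A : (Fin m → Fin n) → ℝ) : Prop :=
  ∀ i : Fin n, 0 ≤ rowSum A i ∧
    ∀ f : Fin m → Fin n, f 0 = i → f ≠ (fun _ => i) →
      A f ≤ (1 / (n : ℝ) ^ (m - 1)) * rowSum A i

/-- A B tensor. -/
def IsB [NeZero m] (A : (Fin m → Fin n) → ℝ) : Prop :=
  ∀ i : Fin n, 0 < rowSum A i ∧
    ∀ f : Fin m → Fin n, f 0 = i → f ≠ (fun _ => i) →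
      A f < (1 / (n : ℝ) ^ (m - 1)) * rowSum A i

/-- A Z tensor: all off-diagonal entries are non-positive. -/
def IsZ [NeZero m] (A : (Fin m → Fin n) → ℝ) : Prop :=
  ∀ (i : Fin n) (f : Fin m → Fin n), f 0 = i → f ≠ (fun _ => i) → A f ≤ 0

/-- The partially all one tensor `E^J`. -/
noncomputable def allOne (m : ℕ) {n : ℕ} (J : Finset (Fin n)) : (Fin m → Fin n) → ℝ :=
  fun f => if ∀ j, f j ∈ J then 1 else 0

/-- `Ĵ(B)`: the set of rows of `B` with at least one positive off-diagonal entry. -/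
noncomputable def hatJ [NeZero m] (B : (Fin m → Fin n) → ℝ) : Finset (Fin n) :=
  univ.filter fun i => ∃ f : Fin m → Fin n, f 0 = i ∧ f ≠ (fun _ => i) ∧ 0 < B f

section Aux
variable {m n : ℕ} [NeZero m]

lemma tApply_eq_sum_mul_tVec (A : (Fin m → Fin n) → ℝ) (x : Fin n → ℝ) :
    tApply A x = ∑ i : Fin n, x i * tVec A x i := by
  rw [tApply, ← Finset.sum_fiberwise (univ : Finset (Fin m → Fin n)) (fun f => f 0)
    (fun f => A f * ∏ j, x (f j))]
  refine Finset.sum_congr rfl fun i _ => ?_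
  rw [tVec, Finset.mul_sum]
  refine Finset.sum_congr rfl fun f hf => ?_
  have h0 : f 0 = i := (Finset.mem_filter.1 hf).2
  rw [← Finset.mul_prod_erase univ (fun j => x (f j)) (Finset.mem_univ (0 : Fin m)), h0]
  ring

lemma tApply_smul (A : (Fin m → Fin n) → ℝ) (c : ℝ) (x : Fin n → ℝ) :
    tApply A (fun k => c * x k) = c ^ m * tApply A x := by
  rw [tApply, tApply, Finset.mul_sum]
  refine Finset.sum_congr rfl fun f _ => ?_
  rw [Finset.prod_mul_distrib, Finset.prod_const, Finset.card_univ, Fintype.card_fin]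
  ring

lemma sum_pow_smul (c : ℝ) (x : Fin n → ℝ) :
    ∑ i, (c * x i) ^ m = c ^ m * ∑ i, x i ^ m := by
  rw [Finset.mul_sum]; exact Finset.sum_congr rfl fun i _ => mul_pow ..

lemma sym_sum_eq_tVec (A : (Fin m → Fin n) → ℝ) (hA : IsSymmT A) (x : Fin n → ℝ)
    (i : Fin n) (j : Fin m) :
    ∑ f : Fin m → Fin n, A f * ((∏ k ∈ univ.erase j, x (f k)) * (if f j = i then 1 else 0))
      = tVec A x i := by
  rw [tVec, Finset.sum_filter]
  have hb : Function.Bijective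
      (fun f : Fin m → Fin n => f ∘ (Equiv.swap 0 j : Equiv.Perm (Fin m))) :=
    Function.Involutive.bijective (fun f => by funext k; simp [Function.comp])
  refine Fintype.sum_bijective _ hb _ _ fun f => ?_
  have hAf : A (f ∘ (Equiv.swap 0 j : Equiv.Perm (Fin m))) = A f := hA _ f
  have hc : (f ∘ (Equiv.swap 0 j : Equiv.Perm (Fin m))) 0 = f j := by
    simp [Function.comp]
  have hprod : ∏ k ∈ univ.erase j, x (f k)
      = ∏ k ∈ univ.erase (0 : Fin m), x ((f ∘ (Equiv.swap 0 j : Equiv.Perm (Fin m))) k) := by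
    refine Finset.prod_equiv (Equiv.swap (0 : Fin m) j) ?_ ?_
    · intro k
      simp only [Finset.mem_erase, Finset.mem_univ, and_true]
      constructor
      · intro hk h0
        exact hk ((Equiv.swap (0:Fin m) j).injective
          (h0.trans (Equiv.swap_apply_right 0 j).symm))
      · intro hk hkj
        apply hk; rw [hkj]; exact Equiv.swap_apply_right 0 j
    · intro k _
      simp [Function.comp, Equiv.swap_apply_self]
  rw [hAf, hc, ← hprod]
  split_ifs <;> ring
end Aux

section Deriv
variable {m n : ℕ} [NeZero m]

lemma hasDerivAt_tApply (A : (Fin m → Fin n) → ℝ) (hA : IsSymmT A) (x : Fin n → ℝ) (i : Fin n) :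
    HasDerivAt (fun t : ℝ => tApply A (fun k => x k + t * (if k = i then 1 else 0)))
      ((m : ℝ) * tVec A x i) 0 := by
  have key : ∀ f : Fin m → Fin n,
      HasDerivAt (fun t : ℝ => A f * ∏ j, (x (f j) + t * (if f j = i then 1 else 0)))
        (A f * ∑ j, (∏ k ∈ univ.erase j, x (f k)) * (if f j = i then (1:ℝ) else 0)) 0 := by
    intro f
    have h1 : ∀ j : Fin m, HasDerivAt (fun t : ℝ => x (f j) + t * (if f j = i then 1 else 0))
        (if f j = i then (1:ℝ) else 0) 0 := fun j => (hasDerivAt_mul_const _).const_add _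
    have h2 := HasDerivAt.fun_finsetProd (u := (univ : Finset (Fin m))) (fun j _ => h1 j)
    have h3 := h2.const_mul (A f)
    simp only [zero_mul, add_zero, smul_eq_mul] at h3
    exact h3
  have hsum := HasDerivAt.fun_sum (u := (univ : Finset (Fin m → Fin n))) (fun f _ => key f)
  have hfun : (fun t : ℝ => ∑ f : Fin m → Fin n,
      A f * ∏ j, (x (f j) + t * (if f j = i then 1 else 0)))
      = fun t : ℝ => tApply A (fun k => x k + t * (if k = i then 1 else 0)) := rfl
  have hder : ∑ f : Fin m → Fin n,
      A f * ∑ j, (∏ k ∈ univ.erase j, x (f k)) * (if f j = i then (1:ℝ) else 0)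
      = (m : ℝ) * tVec A x i := by
    simp only [Finset.mul_sum]
    rw [Finset.sum_comm]
    have : ∀ j : Fin m, ∑ f : Fin m → Fin n,
        A f * ((∏ k ∈ univ.erase j, x (f k)) * (if f j = i then (1:ℝ) else 0))
        = tVec A x i := fun j => sym_sum_eq_tVec A hA x i j
    rw [Finset.sum_congr rfl fun j _ => this j, Finset.sum_const, Finset.card_univ,
      Fintype.card_fin, nsmul_eq_mul]
  rw [hfun, hder] at hsum
  exact hsum

lemma hasDerivAt_sumpow (x : Fin n → ℝ) (i : Fin n) :
    HasDerivAt (fun t : ℝ => ∑ k, (x k + t * (if k = i then 1 else 0)) ^ m)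
      ((m : ℝ) * x i ^ (m - 1)) 0 := by
  have h1 : ∀ k : Fin n, HasDerivAt (fun t : ℝ => (x k + t * (if k = i then 1 else 0)) ^ m)
      ((m : ℝ) * x k ^ (m - 1) * (if k = i then (1:ℝ) else 0)) 0 := by
    intro k
    have := ((hasDerivAt_mul_const (x := (0:ℝ)) (if k = i then (1:ℝ) else 0)).const_add (x k)).fun_pow m
    simpa using this
  have hsum := HasDerivAt.fun_sum (u := (univ : Finset (Fin n))) (fun k _ => h1 k)
  have : ∑ k : Fin n, (m : ℝ) * x k ^ (m - 1) * (if k = i then (1:ℝ) else 0)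
      = (m : ℝ) * x i ^ (m - 1) := by
    simp [mul_ite, mul_one, mul_zero, Finset.sum_ite_eq']
  rw [this] at hsum
  exact hsum

end Deriv

section Main
variable {m n : ℕ} [NeZero m]

lemma sum_pow_pos_of_ne_zero (hmeven : Even m) {x : Fin n → ℝ} (hx : x ≠ 0) :
    0 < ∑ i, x i ^ m := by
  obtain ⟨i, hi⟩ := Function.ne_iff.1 hx
  exact Finset.sum_pos' (fun k _ => hmeven.pow_nonneg _)
    ⟨i, Finset.mem_univ i, hmeven.pow_pos hi⟩

lemma exists_scale (hm0 : m ≠ 0) {s : ℝ} (hs : 0 < s) : ∃ c : ℝ, 0 < c ∧ c ^ m * s = 1 := by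
  refine ⟨s ^ (-(1:ℝ)/m), Real.rpow_pos_of_pos hs _, ?_⟩
  rw [← Real.rpow_natCast (s ^ (-(1:ℝ)/m)) m, ← Real.rpow_mul hs.le]
  rw [div_mul_cancel₀ _ (by exact_mod_cast hm0 : (m:ℝ) ≠ 0)]
  rw [Real.rpow_neg_one]
  exact inv_mul_cancel₀ hs.ne'

lemma tApply_zero (A : (Fin m → Fin n) → ℝ) : tApply A (0 : Fin n → ℝ) = 0 := by
  rw [tApply]
  apply Finset.sum_eq_zero
  intro f _
  simp [Finset.prod_const, zero_pow (NeZero.ne m)]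


/-- An even order real symmetric tensor is positive semi-definite iff all of its
H-eigenvalues are nonnegative. -/
theorem psd_iff_all_H_eigenvalues_nonneg
    {m n : ℕ} [NeZero m] (hm : 2 ≤ m) (hmeven : Even m) (hn : 1 ≤ n)
    (A : (Fin m → Fin n) → ℝ) (hA : IsSymmT A) :
    (∀ x : Fin n → ℝ, 0 ≤ tApply A x) ↔
      ∀ (lam : ℝ) (x : Fin n → ℝ), x ≠ 0 →
        (∀ i : Fin n, tVec A x i = lam * x i ^ (m - 1)) → 0 ≤ lam := by
  have hm0 : (m : ℝ) ≠ 0 := Nat.cast_ne_zero.2 (NeZero.ne m)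
  have hpowsucc : ∀ a : ℝ, a * a ^ (m - 1) = a ^ m := by
    intro a
    rw [← pow_succ']
    congr 1
    omega
  constructor
  · intro hpsd lam x hx heq
    have h1 : tApply A x = lam * ∑ i, x i ^ m := by
      rw [tApply_eq_sum_mul_tVec, Finset.mul_sum]
      refine Finset.sum_congr rfl fun i _ => ?_
      rw [heq i, ← hpowsucc (x i)]
      ring
    have hS : 0 < ∑ i, x i ^ m := sum_pow_pos_of_ne_zero hmeven hx
    have h2 := hpsd x
    rw [h1] at h2
    by_contra hlam
    push_neg at hlam
    exact absurd h2 (not_le.2 (mul_neg_of_neg_of_pos hlam hS))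
  · intro heig y
    by_contra hneg
    push_neg at hneg
    have hy0 : y ≠ 0 := by
      intro h; rw [h, tApply_zero] at hneg; exact lt_irrefl 0 hneg
    -- the "sphere"
    set S : Set (Fin n → ℝ) := {z | ∑ i, z i ^ m = 1} with hSdef
    have hGcont : Continuous fun z : Fin n → ℝ => ∑ i, z i ^ m :=
      continuous_finset_sum _ fun i _ => (continuous_apply i).pow m
    have hSclosed : IsClosed S := isClosed_eq hGcont continuous_const
    have hSbdd : Bornology.IsBounded S := by
      apply (Metric.isBounded_closedBall (x := (0 : Fin n → ℝ)) (r := 1)).subset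
      intro z hz
      have hz' : ∑ i, z i ^ m = 1 := hz
      rw [Metric.mem_closedBall, dist_zero_right]
      refine (pi_norm_le_iff_of_nonneg zero_le_one).2 fun i => ?_
      have h1 : z i ^ m ≤ 1 := by
        rw [← hz']
        exact Finset.single_le_sum (f := fun k => z k ^ m) (fun k _ => hmeven.pow_nonneg _) (Finset.mem_univ i)
      have h2 : |z i| ^ m ≤ 1 := by
        rw [← abs_pow]
        rw [abs_of_nonneg (hmeven.pow_nonneg _)]
        exact h1
      have := (pow_le_one_iff_of_nonneg (abs_nonneg (z i)) (NeZero.ne m)).1 h2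
      simpa using this
    have hScompact : IsCompact S := Metric.isCompact_of_isClosed_isBounded hSclosed hSbdd
    have hSne : S.Nonempty := by
      refine ⟨fun k => if k = ⟨0, hn⟩ then 1 else 0, ?_⟩
      show (∑ i : Fin n, (if i = ⟨0, hn⟩ then (1:ℝ) else 0) ^ m) = 1
      have hterm : ∀ i : Fin n, (if i = ⟨0, hn⟩ then (1:ℝ) else 0) ^ m
          = if i = ⟨0, hn⟩ then (1:ℝ) else 0 := by
        intro i; split_ifs <;> simp [zero_pow (NeZero.ne m)]
      rw [Finset.sum_congr rfl fun i _ => hterm i]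
      simp
    have hcont : ContinuousOn (tApply A) S := by
      apply Continuous.continuousOn
      show Continuous fun z : Fin n → ℝ => ∑ f : Fin m → Fin n, A f * ∏ j, z (f j)
      exact continuous_finset_sum _ fun f _ =>
        continuous_const.mul (continuous_finset_prod _ fun j _ => continuous_apply _)
    obtain ⟨x₀, hx₀S, hmin⟩ := hScompact.exists_isMinOn hSne hcont
    set lam := tApply A x₀ with hlamdef
    have hmin' : ∀ z ∈ S, lam ≤ tApply A z := fun z hz => hmin hz
    -- lower bound : for all z, lam * G z ≤ tApply A z
    have hlb : ∀ z : Fin n → ℝ, z ≠ 0 → lam * (∑ i, z i ^ m) ≤ tApply A z := by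
      intro z hz
      have hs : 0 < ∑ i, z i ^ m := sum_pow_pos_of_ne_zero hmeven hz
      obtain ⟨c, hc, hcs⟩ := exists_scale (NeZero.ne m) hs
      have hzS : (fun k => c * z k) ∈ S := by
        show (∑ i, (c * z i) ^ m) = 1
        rw [sum_pow_smul]; exact hcs
      have h1 : lam ≤ c ^ m * tApply A z := by
        have := hmin' _ hzS
        rwa [tApply_smul] at this
      have h2 := mul_le_mul_of_nonneg_right h1 hs.le
      calc lam * (∑ i, z i ^ m) ≤ (c ^ m * tApply A z) * (∑ i, z i ^ m) := h2
        _ = tApply A z * (c ^ m * (∑ i, z i ^ m)) := by ring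
        _ = tApply A z := by rw [hcs, mul_one]
    have hlamneg : lam < 0 := by
      have h1 := hlb y hy0
      have hs : 0 < ∑ i, y i ^ m := sum_pow_pos_of_ne_zero hmeven hy0
      nlinarith
    have hx₀ne : x₀ ≠ 0 := by
      intro h
      have h1 : (∑ i : Fin n, x₀ i ^ m) = 1 := hx₀S
      rw [h] at h1
      simp [zero_pow (NeZero.ne m)] at h1
    -- psi is minimized at x₀
    have hψ : ∀ z : Fin n → ℝ, 0 ≤ tApply A z - lam * ∑ i, z i ^ m := by
      intro z
      rcases eq_or_ne z 0 with rfl | hz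
      · simp [tApply_zero, zero_pow (NeZero.ne m)]
      · linarith [hlb z hz]
    have hx₀sum : (∑ i : Fin n, x₀ i ^ m) = 1 := hx₀S
    have heigeq : ∀ i : Fin n, tVec A x₀ i = lam * x₀ i ^ (m - 1) := by
      intro i
      have hder : HasDerivAt
          (fun t : ℝ => tApply A (fun k => x₀ k + t * (if k = i then 1 else 0))
            - lam * ∑ k, (x₀ k + t * (if k = i then 1 else 0)) ^ m)
          ((m : ℝ) * tVec A x₀ i - lam * ((m : ℝ) * x₀ i ^ (m - 1))) 0 :=
        (hasDerivAt_tApply A hA x₀ i).sub ((hasDerivAt_sumpow x₀ i).const_mul lam)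
      have hT0 : tApply A (fun k => x₀ k + (0:ℝ) * (if k = i then 1 else 0)) = lam := by
        rw [hlamdef]; congr 1; funext k; ring
      have hG0 : (∑ k, (x₀ k + (0:ℝ) * (if k = i then 1 else 0)) ^ m) = 1 := by
        rw [← hx₀sum]
        exact Finset.sum_congr rfl fun k _ => by simp
      have h0 : tApply A (fun k => x₀ k + (0:ℝ) * (if k = i then 1 else 0))
          - lam * ∑ k, (x₀ k + (0:ℝ) * (if k = i then 1 else 0)) ^ m = 0 := by
        rw [hT0, hG0]; ring
      have hlocmin : IsLocalMin
          (fun t : ℝ => tApply A (fun k => x₀ k + t * (if k = i then 1 else 0))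
            - lam * ∑ k, (x₀ k + t * (if k = i then 1 else 0)) ^ m) 0 := by
        apply Filter.Eventually.of_forall
        intro t
        dsimp only
        rw [h0]
        exact hψ _
      have hzero := hlocmin.hasDerivAt_eq_zero hder
      have : (m : ℝ) * (tVec A x₀ i - lam * x₀ i ^ (m - 1)) = 0 := by linarith
      have := (mul_eq_zero.1 this).resolve_left hm0
      linarith
    exact absurd (heig lam x₀ hx₀ne heigeq) (not_le.2 hlamneg)



end Main
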